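/- Let α > 0 and let f, g ∈ ℂ^{2n-1} be discrete signals supported in {0, ..., n-1} (i.e., f[s] = g[s] = 0 for s = n, ..., 2n-2). If |f̂| = |ĝ| and |F(f[s]e^{-sα})| = |F(g[s]e^{-sα})| (where F denotes the DFT of size 2n-1), then f = e^{iφ} g for some φ ∈ ℝ. -/

import Mathlib

open Complex Real

noncomputable section

/-- Discrete Fourier transform of size `N`: `ĥ[k] = Σ_{s=0}^{N-1} h[s] e^{-2πisk/N}`. -/
def dft (N : ℕ) (h : Fin N → ℂ) (k : ℤ) : ℂ :=
  ∑ s : Fin N, h s * Complex.exp (-2 * π * Complex.I * (s : ℕ) * k / N)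

namespace PRAux

open Polynomial

variable (n : ℕ)

def poly (u : ℕ → ℂ) : Polynomial ℂ :=
  ∑ s ∈ Finset.range n, Polynomial.C (u s) * Polynomial.X ^ s

def tild (u : ℕ → ℂ) : Polynomial ℂ :=
  ∑ s ∈ Finset.range n, Polynomial.C (u s) * Polynomial.X ^ (n - 1 - s)

lemma eval_poly (u : ℕ → ℂ) (x : ℂ) :
    (poly n u).eval x = ∑ s ∈ Finset.range n, u s * x ^ s := by
  rw [poly, Polynomial.eval_finset_sum]
  simp

lemma eval_tild (u : ℕ → ℂ) (x : ℂ) :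
    (tild n u).eval x = ∑ s ∈ Finset.range n, u s * x ^ (n - 1 - s) := by
  rw [tild, Polynomial.eval_finset_sum]
  simp

lemma coeff_poly (u : ℕ → ℂ) (i : ℕ) :
    (poly n u).coeff i = if i < n then u i else 0 := by
  simp [poly, Polynomial.finset_sum_coeff, Polynomial.coeff_C_mul, Polynomial.coeff_X_pow,
    Finset.sum_ite_eq, Finset.mem_range]

lemma coeff_tild (u : ℕ → ℂ) (i : ℕ) :
    (tild n u).coeff i = if i < n then u (n - 1 - i) else 0 := by
  rw [tild, Polynomial.finset_sum_coeff]
  simp only [Polynomial.coeff_C_mul, Polynomial.coeff_X_pow, mul_ite, mul_one, mul_zero]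
  by_cases hi : i < n
  · rw [if_pos hi, Finset.sum_eq_single (n - 1 - i)]
    · rw [if_pos (by omega)]
    · intro s hs hne
      rw [if_neg (by rw [Finset.mem_range] at hs; omega)]
    · intro h
      exact absurd (Finset.mem_range.2 (by omega)) h
  · rw [if_neg hi]
    apply Finset.sum_eq_zero
    intro s hs
    rw [Finset.mem_range] at hs
    rw [if_neg (by omega)]

lemma natDegree_poly_le (u : ℕ → ℂ) : (poly n u).natDegree ≤ n - 1 := by
  apply Polynomial.natDegree_sum_le_of_forall_le
  intro s hs
  exact le_trans (Polynomial.natDegree_C_mul_X_pow_le _ _)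
    (by rw [Finset.mem_range] at hs; omega)

lemma natDegree_tild_le (u : ℕ → ℂ) : (tild n u).natDegree ≤ n - 1 := by
  apply Polynomial.natDegree_sum_le_of_forall_le
  intro s hs
  exact le_trans (Polynomial.natDegree_C_mul_X_pow_le _ _) (by omega)

lemma poly_eq_zero_iff (u : ℕ → ℂ) : poly n u = 0 ↔ ∀ i < n, u i = 0 := by
  constructor
  · intro h i hi
    have := coeff_poly n u i
    rw [h, Polynomial.coeff_zero, if_pos hi] at this
    exact this.symm
  · intro h
    ext i
    rw [coeff_poly, Polynomial.coeff_zero]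
    split_ifs with hi
    · exact h i hi
    · rfl

lemma tild_eq_zero_iff (u : ℕ → ℂ) : tild n u = 0 ↔ ∀ i < n, u i = 0 := by
  constructor
  · intro h i hi
    have := coeff_tild n u (n - 1 - i)
    rw [h, Polynomial.coeff_zero, if_pos (by omega)] at this
    have hii : n - 1 - (n - 1 - i) = i := by omega
    rw [hii] at this
    exact this.symm
  · intro h
    ext i
    rw [coeff_tild, Polynomial.coeff_zero]
    split_ifs with hi
    · exact h _ (by omega)
    · rfl

end PRAux

open Polynomial PRAux

/-- **Discrete phase retrieval with the masks `1` and `e^{-sα}`.**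
If `f, g ∈ ℂ^{2n-1}` are supported in `{0, ..., n-1}`, `|f̂| = |ĝ|`, and the DFT moduli
of the exponentially masked signals also agree, then `f = e^{iφ} g` for some real `φ`. -/
theorem stmt4 (n : ℕ) (hn : 0 < n) (α : ℝ) (hα : 0 < α)
    (f g : Fin (2 * n - 1) → ℂ)
    (hf0 : ∀ s : Fin (2 * n - 1), n ≤ (s : ℕ) → f s = 0)
    (hg0 : ∀ s : Fin (2 * n - 1), n ≤ (s : ℕ) → g s = 0)
    (hmod1 : ∀ k : ℤ, ‖dft (2 * n - 1) f k‖ = ‖dft (2 * n - 1) g k‖)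
    (hmod2 : ∀ k : ℤ,
      ‖dft (2 * n - 1) (fun s => f s * Real.exp (-(s : ℕ) * α)) k‖ =
      ‖dft (2 * n - 1) (fun s => g s * Real.exp (-(s : ℕ) * α)) k‖) :
    ∃ φ : ℝ, ∀ s : Fin (2 * n - 1), f s = Complex.exp (Complex.I * φ) * g s := by
  classical
  have hN : 2 * n - 1 ≠ 0 := by omega
  -- extended coefficient functions
  set F : ℕ → ℂ := fun s => if h : s < 2 * n - 1 then f ⟨s, h⟩ else 0 with hFdef
  set G : ℕ → ℂ := fun s => if h : s < 2 * n - 1 then g ⟨s, h⟩ else 0 with hGdef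
  have hFs : ∀ s : Fin (2 * n - 1), F (s : ℕ) = f s := by
    intro s; simp only [hFdef, s.isLt, dif_pos, Fin.eta]
  have hGs : ∀ s : Fin (2 * n - 1), G (s : ℕ) = g s := by
    intro s; simp only [hGdef, s.isLt, dif_pos, Fin.eta]
  have hF0 : ∀ s, n ≤ s → F s = 0 := by
    intro s hs
    by_cases h : s < 2 * n - 1
    · simp only [hFdef, dif_pos h]; exact hf0 ⟨s, h⟩ hs
    · simp only [hFdef, dif_neg h]
  have hG0 : ∀ s, n ≤ s → G s = 0 := by
    intro s hs
    by_cases h : s < 2 * n - 1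
    · simp only [hGdef, dif_pos h]; exact hg0 ⟨s, h⟩ hs
    · simp only [hGdef, dif_neg h]
  -- roots of unity
  set z : ℤ → ℂ := fun k => Complex.exp (-2 * π * Complex.I * k / ((2 * n - 1 : ℕ) : ℂ))
    with hzdef
  have hz_pow : ∀ (k : ℤ) (s : ℕ),
      (z k) ^ s = Complex.exp (-2 * π * Complex.I * s * k / ((2 * n - 1 : ℕ) : ℂ)) := by
    intro k s
    rw [hzdef, ← Complex.exp_nat_mul]
    congr 1
    push_cast
    ring
  have hz_ne : ∀ k, z k ≠ 0 := fun k => Complex.exp_ne_zero _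
  have hz_conj : ∀ k, (starRingEnd ℂ) (z k) = (z k)⁻¹ := by
    intro k
    rw [hzdef, ← Complex.exp_conj, ← Complex.exp_neg]
    congr 1
    simp only [map_div₀, map_mul, map_neg, map_ofNat, Complex.conj_I, Complex.conj_ofReal,
      map_intCast, Complex.conj_natCast]
    ring
  -- dft as polynomial evaluation
  have hdft : ∀ (u : Fin (2 * n - 1) → ℂ) (U : ℕ → ℂ),
      (∀ s : Fin (2 * n - 1), U (s : ℕ) = u s) → (∀ s, n ≤ s → U s = 0) →
      ∀ k : ℤ, dft (2 * n - 1) u k = (poly n U).eval (z k) := by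
    intro u U hUu hU0 k
    have h1 : dft (2 * n - 1) u k = ∑ s : Fin (2 * n - 1), U (s : ℕ) * (z k) ^ (s : ℕ) := by
      rw [dft]
      apply Finset.sum_congr rfl
      intro s _
      rw [hUu s, hz_pow]
    rw [h1, Fin.sum_univ_eq_sum_range (fun s => U s * (z k) ^ s) (2 * n - 1)]
    rw [eval_poly]
    apply (Finset.sum_subset (Finset.range_subset_range.2 (by omega)) ?_).symm
    intro x _ hx
    rw [Finset.mem_range, not_lt] at hx
    rw [hU0 x hx, zero_mul]
  -- vanishing lemma
  have hvanish : ∀ P : Polynomial ℂ, P.natDegree < 2 * n - 1 →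
      (∀ k : ℤ, P.eval (z k) = 0) → P = 0 := by
    intro P hdeg hroot
    have hprim : IsPrimitiveRoot (Complex.exp (2 * π * Complex.I / ((2 * n - 1 : ℕ) : ℂ)))
        (2 * n - 1) := Complex.isPrimitiveRoot_exp _ hN
    apply Polynomial.eq_zero_of_natDegree_lt_card_of_eval_eq_zero' P
      (Polynomial.nthRootsFinset (2 * n - 1) (1 : ℂ))
    · intro x hx
      have hx1 : x ^ (2 * n - 1) = 1 := (Polynomial.mem_nthRootsFinset (by omega) 1).1 hx
      haveI : NeZero (2 * n - 1) := ⟨hN⟩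
      obtain ⟨i, hi, hix⟩ := hprim.eq_pow_of_pow_eq_one hx1
      have hxz : x = z (-(i : ℤ)) := by
        rw [← hix, hzdef, ← Complex.exp_nat_mul]
        congr 1
        push_cast
        ring
      rw [hxz]; exact hroot _
    · rw [hprim.card_nthRootsFinset]; exact hdeg
  -- conjugate evaluation
  have hconj : ∀ (U V : ℕ → ℂ), (∀ s, V s = (starRingEnd ℂ) (U s)) → ∀ k : ℤ,
      (tild n V).eval (z k) = (z k) ^ (n - 1) * (starRingEnd ℂ) ((poly n U).eval (z k)) := by
    intro U V hV k
    rw [eval_tild, eval_poly, map_sum, Finset.mul_sum]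
    apply Finset.sum_congr rfl
    intro s hs
    rw [Finset.mem_range] at hs
    rw [hV s, map_mul, map_pow, hz_conj, inv_pow]
    have h2 : (z k) ^ (n - 1) * ((z k) ^ s)⁻¹ = (z k) ^ (n - 1 - s) := by
      rw [mul_inv_eq_iff_eq_mul₀ (pow_ne_zero s (hz_ne k)), ← pow_add]
      congr 1
      omega
    rw [← h2]
    ring
  -- modulus squared
  have hmodsq : ∀ a b : ℂ, ‖a‖ = ‖b‖ → a * (starRingEnd ℂ) a = b * (starRingEnd ℂ) b := by
    intro a b h
    rw [Complex.mul_conj, Complex.mul_conj]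
    norm_cast
    rw [Complex.normSq_eq_norm_sq, Complex.normSq_eq_norm_sq, h]
  -- masks
  set r : ℝ := Real.exp (-α) with hrdef
  have hr0 : (r : ℂ) ≠ 0 := by
    simp only [Ne, Complex.ofReal_eq_zero]
    exact (Real.exp_pos _).ne'
  set q : ℝ := r * r with hqdef
  have hq0 : (q : ℂ) ≠ 0 := by
    rw [hqdef]
    push_cast
    exact mul_ne_zero hr0 hr0
  have hqpos : 0 < q := mul_pos (Real.exp_pos _) (Real.exp_pos _)
  have hq1 : q < 1 := by
    have h1 : r < 1 := Real.exp_lt_one_iff.2 (by linarith)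
    have h2 : 0 < r := Real.exp_pos _
    nlinarith
  have hmaskexp : ∀ s : Fin (2 * n - 1),
      (Real.exp (-(s : ℕ) * α) : ℂ) = (r : ℂ) ^ (s : ℕ) := by
    intro s
    rw [show (-(s : ℕ) * α : ℝ) = (s : ℕ) * (-α) by ring, Real.exp_nat_mul, ← hrdef]
    push_cast
    ring
  have hmaskf : ∀ s : Fin (2 * n - 1),
      F (s : ℕ) * (r : ℂ) ^ (s : ℕ) = f s * Real.exp (-(s : ℕ) * α) := by
    intro s
    rw [hFs s, hmaskexp s]
  have hmaskg : ∀ s : Fin (2 * n - 1),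
      G (s : ℕ) * (r : ℂ) ^ (s : ℕ) = g s * Real.exp (-(s : ℕ) * α) := by
    intro s
    rw [hGs s, hmaskexp s]
  have hF0r : ∀ s, n ≤ s → F s * (r : ℂ) ^ s = 0 := fun s hs => by
    rw [hF0 s hs, zero_mul]
  have hG0r : ∀ s, n ≤ s → G s * (r : ℂ) ^ s = 0 := fun s hs => by
    rw [hG0 s hs, zero_mul]
  -- first polynomial identity (autocorrelation)
  have hQ1 : poly n F * tild n (fun s => (starRingEnd ℂ) (F s)) =
      poly n G * tild n (fun s => (starRingEnd ℂ) (G s)) := by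
    apply sub_eq_zero.1
    apply hvanish
    · apply lt_of_le_of_lt (Polynomial.natDegree_sub_le _ _)
      apply max_lt <;>
      · apply lt_of_le_of_lt (Polynomial.natDegree_mul_le)
        have h1 := natDegree_poly_le n
        have h2 := natDegree_tild_le n
        have := h1 F
        have := h1 G
        have := h2 (fun s => (starRingEnd ℂ) (F s))
        have := h2 (fun s => (starRingEnd ℂ) (G s))
        omega
    · intro k
      rw [Polynomial.eval_sub, Polynomial.eval_mul, Polynomial.eval_mul,
        hconj F _ (fun s => rfl) k, hconj G _ (fun s => rfl) k,
        ← hdft f F hFs hF0 k, ← hdft g G hGs hG0 k]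
      have hm := hmodsq _ _ (hmod1 k)
      linear_combination (z k) ^ (n - 1) * hm
  -- second polynomial identity (masked autocorrelation)
  have hQ2 : poly n (fun s => F s * (r : ℂ) ^ s) *
        tild n (fun s => (starRingEnd ℂ) (F s) * (r : ℂ) ^ s) =
      poly n (fun s => G s * (r : ℂ) ^ s) *
        tild n (fun s => (starRingEnd ℂ) (G s) * (r : ℂ) ^ s) := by
    apply sub_eq_zero.1
    apply hvanish
    · apply lt_of_le_of_lt (Polynomial.natDegree_sub_le _ _)
      apply max_lt <;>
      · apply lt_of_le_of_lt (Polynomial.natDegree_mul_le)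
        have h1 := natDegree_poly_le n
        have h2 := natDegree_tild_le n
        have := h1 (fun s => F s * (r : ℂ) ^ s)
        have := h1 (fun s => G s * (r : ℂ) ^ s)
        have := h2 (fun s => (starRingEnd ℂ) (F s) * (r : ℂ) ^ s)
        have := h2 (fun s => (starRingEnd ℂ) (G s) * (r : ℂ) ^ s)
        omega
    · intro k
      have hcf : ∀ s, (starRingEnd ℂ) (F s) * (r : ℂ) ^ s =
          (starRingEnd ℂ) (F s * (r : ℂ) ^ s) := by
        intro s
        rw [map_mul, map_pow, Complex.conj_ofReal]
      have hcg : ∀ s, (starRingEnd ℂ) (G s) * (r : ℂ) ^ s =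
          (starRingEnd ℂ) (G s * (r : ℂ) ^ s) := by
        intro s
        rw [map_mul, map_pow, Complex.conj_ofReal]
      rw [Polynomial.eval_sub, Polynomial.eval_mul, Polynomial.eval_mul,
        hconj (fun s => F s * (r : ℂ) ^ s) _ hcf k,
        hconj (fun s => G s * (r : ℂ) ^ s) _ hcg k,
        ← hdft _ _ hmaskf hF0r k,
        ← hdft _ _ hmaskg hG0r k]
      have hm := hmodsq _ _ (hmod2 k)
      linear_combination (z k) ^ (n - 1) * hm
  -- transform the masked identity into a q-scaled identity
  have hI2 : poly n (fun s => F s * (q : ℂ) ^ s) * tild n (fun s => (starRingEnd ℂ) (F s)) =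
      poly n (fun s => G s * (q : ℂ) ^ s) * tild n (fun s => (starRingEnd ℂ) (G s)) := by
    have hqc : (q : ℂ) = (r : ℂ) * (r : ℂ) := by rw [hqdef]; push_cast; ring
    apply Polynomial.funext
    intro u
    have h := congrArg (Polynomial.eval ((r : ℂ) * u)) hQ2
    simp only [Polynomial.eval_mul] at h
    have e1 : ∀ U : ℕ → ℂ, (poly n (fun s => U s * (r : ℂ) ^ s)).eval ((r : ℂ) * u) =
        (poly n (fun s => U s * (q : ℂ) ^ s)).eval u := by
      intro U
      rw [eval_poly, eval_poly]
      apply Finset.sum_congr rfl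
      intro s _
      rw [hqc, mul_pow, mul_pow]
      ring
    have e2 : ∀ U : ℕ → ℂ, (tild n (fun s => U s * (r : ℂ) ^ s)).eval ((r : ℂ) * u) =
        (r : ℂ) ^ (n - 1) * (tild n U).eval u := by
      intro U
      rw [eval_tild, eval_tild, Finset.mul_sum]
      apply Finset.sum_congr rfl
      intro s hs
      rw [Finset.mem_range] at hs
      rw [mul_pow]
      have hp : (r : ℂ) ^ s * (r : ℂ) ^ (n - 1 - s) = (r : ℂ) ^ (n - 1) := by
        rw [← pow_add]; congr 1; omega
      linear_combination U s * u ^ (n - 1 - s) * hp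
    rw [e1 F, e1 G, e2 (fun s => (starRingEnd ℂ) (F s)),
      e2 (fun s => (starRingEnd ℂ) (G s))] at h
    rw [Polynomial.eval_mul, Polynomial.eval_mul]
    exact mul_right_cancel₀ (pow_ne_zero _ hr0) (by linear_combination h)
  -- degenerate case: g vanishes
  by_cases hgz : ∀ i < n, G i = 0
  · refine ⟨0, fun s => ?_⟩
    have hg' : g s = 0 := by
      by_cases h : (s : ℕ) < n
      · rw [← hGs s]; exact hgz _ h
      · exact hg0 s (le_of_not_gt h)
    have hB : poly n G = 0 := (poly_eq_zero_iff _ _).2 hgz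
    have hprod : poly n F * tild n (fun s => (starRingEnd ℂ) (F s)) = 0 := by
      rw [hQ1, hB, zero_mul]
    have hf' : f s = 0 := by
      by_cases h : (s : ℕ) < n
      · rw [← hFs s]
        rcases mul_eq_zero.1 hprod with h1 | h1
        · exact (poly_eq_zero_iff _ _).1 h1 _ h
        · have := (tild_eq_zero_iff _ _).1 h1 _ h
          simpa using this
      · exact hf0 s (le_of_not_gt h)
    rw [hf', hg', mul_zero]
  -- main case
  push_neg at hgz
  obtain ⟨l₀, hl₀n, hGl₀⟩ := hgz
  have hfnz : ∃ i, i < n ∧ F i ≠ 0 := by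
    by_contra hc
    push_neg at hc
    have hA : poly n F = 0 := (poly_eq_zero_iff _ _).2 hc
    have hprod : poly n G * tild n (fun s => (starRingEnd ℂ) (G s)) = 0 := by
      rw [← hQ1, hA, zero_mul]
    rcases mul_eq_zero.1 hprod with h1 | h1
    · exact hGl₀ ((poly_eq_zero_iff _ _).1 h1 _ hl₀n)
    · have := (tild_eq_zero_iff _ _).1 h1 _ hl₀n
      exact hGl₀ (by simpa using this)
  obtain ⟨i₀, hi₀n, hFi₀⟩ := hfnz
  have hA : poly n F ≠ 0 := by
    rw [Ne, poly_eq_zero_iff]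
    push_neg
    exact ⟨i₀, hi₀n, hFi₀⟩
  have hB : poly n G ≠ 0 := by
    rw [Ne, poly_eq_zero_iff]
    push_neg
    exact ⟨l₀, hl₀n, hGl₀⟩
  have hAt : tild n (fun s => (starRingEnd ℂ) (F s)) ≠ 0 := by
    rw [Ne, tild_eq_zero_iff]
    push_neg
    exact ⟨i₀, hi₀n, by simpa using hFi₀⟩
  have hBt : tild n (fun s => (starRingEnd ℂ) (G s)) ≠ 0 := by
    rw [Ne, tild_eq_zero_iff]
    push_neg
    exact ⟨l₀, hl₀n, by simpa using hGl₀⟩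
  -- the q-commutation identity
  have hstar : poly n (fun s => F s * (q : ℂ) ^ s) * poly n G =
      poly n F * poly n (fun s => G s * (q : ℂ) ^ s) := by
    have h0 : (poly n (fun s => F s * (q : ℂ) ^ s) * poly n G -
        poly n F * poly n (fun s => G s * (q : ℂ) ^ s)) *
        (tild n (fun s => (starRingEnd ℂ) (F s)) * tild n (fun s => (starRingEnd ℂ) (G s))) =
        0 := by
      linear_combination (poly n G * tild n (fun s => (starRingEnd ℂ) (G s))) * hI2 -
        (poly n (fun s => G s * (q : ℂ) ^ s) * tild n (fun s => (starRingEnd ℂ) (G s))) * hQ1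
    rcases mul_eq_zero.1 h0 with h | h
    · exact sub_eq_zero.1 h
    · exact absurd h (mul_ne_zero hAt hBt)
  -- scaling lemma
  have scale_poly : ∀ (U : ℕ → ℂ) (c : ℂ),
      (poly n U).comp (Polynomial.C c * Polynomial.X) = poly n (fun s => U s * c ^ s) := by
    intro U c
    apply Polynomial.funext
    intro x
    rw [Polynomial.eval_comp, Polynomial.eval_mul, Polynomial.eval_C, Polynomial.eval_X,
      eval_poly, eval_poly]
    exact Finset.sum_congr rfl fun s _ => by rw [mul_pow]; ring
  -- iterated q-commutation
  have hiter : ∀ m : ℕ, poly n (fun s => F s * ((q : ℂ) ^ m) ^ s) * poly n G =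
      poly n F * poly n (fun s => G s * ((q : ℂ) ^ m) ^ s) := by
    intro m
    induction m with
    | zero =>
      simp only [pow_zero, one_pow, mul_one]
    | succ m ih =>
      have hcomp := congrArg (fun P : Polynomial ℂ =>
        P.comp (Polynomial.C ((q : ℂ) ^ m) * Polynomial.X)) hstar
      simp only [Polynomial.mul_comp, scale_poly] at hcomp
      have hexp : ∀ U : ℕ → ℂ,
          (fun s => (U s * (q : ℂ) ^ s) * ((q : ℂ) ^ m) ^ s) =
          (fun s => U s * ((q : ℂ) ^ (m + 1)) ^ s) := by
        intro U
        funext s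
        rw [pow_succ, mul_pow]
        ring
      rw [hexp F, hexp G] at hcomp
      have hAm : poly n (fun s => F s * ((q : ℂ) ^ m) ^ s) ≠ 0 := by
        rw [Ne, poly_eq_zero_iff]
        push_neg
        exact ⟨i₀, hi₀n, mul_ne_zero hFi₀ (pow_ne_zero _ (pow_ne_zero _ hq0))⟩
      apply mul_left_cancel₀ hAm
      linear_combination poly n (fun s => F s * ((q : ℂ) ^ (m + 1)) ^ s) * ih +
        poly n F * hcomp
  -- proportionality of coefficients
  have hab : ∀ i l : ℕ, (poly n F).coeff i * (poly n G).coeff l =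
      (poly n F).coeff l * (poly n G).coeff i := by
    intro i l
    rcases eq_or_ne i l with rfl | hil
    · ring
    set R : Polynomial ℂ := ∑ p ∈ Finset.HasAntidiagonal.antidiagonal (i + l),
        Polynomial.C ((poly n F).coeff p.1 * (poly n G).coeff p.2) *
          (Polynomial.X ^ p.1 - Polynomial.X ^ p.2) with hRdef
    have ha : ∀ (m p1 : ℕ), (poly n (fun s => F s * ((q : ℂ) ^ m) ^ s)).coeff p1 =
        (poly n F).coeff p1 * ((q : ℂ) ^ m) ^ p1 := by
      intro m p1
      rw [coeff_poly, coeff_poly]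
      split_ifs
      · rfl
      · rw [zero_mul]
    have hb : ∀ (m p2 : ℕ), (poly n (fun s => G s * ((q : ℂ) ^ m) ^ s)).coeff p2 =
        (poly n G).coeff p2 * ((q : ℂ) ^ m) ^ p2 := by
      intro m p2
      rw [coeff_poly, coeff_poly]
      split_ifs
      · rfl
      · rw [zero_mul]
    have hRroot : ∀ m : ℕ, R.eval ((q : ℂ) ^ m) = 0 := by
      intro m
      have hcoeff := congrArg (fun P : Polynomial ℂ => P.coeff (i + l)) (hiter m)
      simp only [Polynomial.coeff_mul, ha, hb] at hcoeff
      rw [hRdef, Polynomial.eval_finset_sum]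
      simp only [Polynomial.eval_mul, Polynomial.eval_C, Polynomial.eval_sub,
        Polynomial.eval_pow, Polynomial.eval_X]
      have hsplit : ∀ p ∈ Finset.HasAntidiagonal.antidiagonal (i + l),
          (poly n F).coeff p.1 * (poly n G).coeff p.2 *
            (((q : ℂ) ^ m) ^ p.1 - ((q : ℂ) ^ m) ^ p.2) =
          ((poly n F).coeff p.1 * ((q : ℂ) ^ m) ^ p.1 * (poly n G).coeff p.2) -
            ((poly n F).coeff p.1 * ((poly n G).coeff p.2 * ((q : ℂ) ^ m) ^ p.2)) := by
        intro p _
        ring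
      rw [Finset.sum_congr rfl hsplit, Finset.sum_sub_distrib, hcoeff, sub_self]
    have hR0 : R = 0 := by
      apply Polynomial.eq_zero_of_infinite_isRoot
      refine Set.infinite_of_injective_forall_mem
        (f := fun m : ℕ => ((q : ℂ) ^ m)) ?_ ?_
      · intro m1 m2 hm
        have hm' : q ^ m1 = q ^ m2 := by
          have : ((q ^ m1 : ℝ) : ℂ) = ((q ^ m2 : ℝ) : ℂ) := by push_cast; exact hm
          exact_mod_cast this
        by_contra hne
        rcases lt_or_gt_of_ne hne with h | h
        · exact absurd hm' (ne_of_gt (pow_lt_pow_right_of_lt_one₀ hqpos hq1 h))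
        · exact absurd hm' (ne_of_lt (pow_lt_pow_right_of_lt_one₀ hqpos hq1 h))
      · intro m
        exact hRroot m
    have hcoeffR := congrArg (fun P : Polynomial ℂ => P.coeff i) hR0
    simp only [hRdef, Polynomial.finset_sum_coeff, Polynomial.coeff_zero,
      Polynomial.coeff_C_mul, Polynomial.coeff_sub, Polynomial.coeff_X_pow] at hcoeffR
    have h1a : ∑ p ∈ Finset.HasAntidiagonal.antidiagonal (i + l),
        (poly n F).coeff p.1 * (poly n G).coeff p.2 * (if i = p.1 then (1 : ℂ) else 0) =
        (poly n F).coeff i * (poly n G).coeff l := by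
      rw [Finset.sum_eq_single (i, l)]
      · rw [if_pos rfl, mul_one]
      · intro p hp hne
        rw [Finset.HasAntidiagonal.mem_antidiagonal] at hp
        have hni : i ≠ p.1 := fun hc => hne (Prod.ext_iff.2 ⟨hc.symm, by omega⟩)
        rw [if_neg hni, mul_zero]
      · intro hc
        exact absurd (Finset.HasAntidiagonal.mem_antidiagonal.2 (by simp)) hc
    have h1b : ∑ p ∈ Finset.HasAntidiagonal.antidiagonal (i + l),
        (poly n F).coeff p.1 * (poly n G).coeff p.2 * (if i = p.2 then (1 : ℂ) else 0) =
        (poly n F).coeff l * (poly n G).coeff i := by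
      rw [Finset.sum_eq_single (l, i)]
      · rw [if_pos rfl, mul_one]
      · intro p hp hne
        rw [Finset.HasAntidiagonal.mem_antidiagonal] at hp
        have hni : i ≠ p.2 := fun hc => hne (Prod.ext_iff.2 ⟨by omega, hc.symm⟩)
        rw [if_neg hni, mul_zero]
      · intro hc
        exact absurd (Finset.HasAntidiagonal.mem_antidiagonal.2 (by omega)) hc
    simp only [mul_sub] at hcoeffR
    rw [Finset.sum_sub_distrib, h1a, h1b] at hcoeffR
    exact sub_eq_zero.1 hcoeffR
  -- the proportionality constant
  set c : ℂ := F l₀ / G l₀ with hcdef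
  have hc : ∀ s, s < n → F s = c * G s := by
    intro s hs
    have h := hab s l₀
    rw [coeff_poly, coeff_poly, coeff_poly, coeff_poly, if_pos hs, if_pos hl₀n,
      if_pos hs, if_pos hl₀n] at h
    rw [hcdef]
    field_simp
    linear_combination h
  -- modulus of c is one
  have hpolyc : poly n F = Polynomial.C c * poly n G := by
    ext i
    rw [Polynomial.coeff_C_mul, coeff_poly, coeff_poly]
    split_ifs with hi
    · exact hc i hi
    · rw [mul_zero]
  have htildc : tild n (fun s => (starRingEnd ℂ) (F s)) =
      Polynomial.C ((starRingEnd ℂ) c) * tild n (fun s => (starRingEnd ℂ) (G s)) := by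
    ext i
    rw [Polynomial.coeff_C_mul, coeff_tild, coeff_tild]
    split_ifs with hi
    · rw [← map_mul, hc (n - 1 - i) (by omega)]
    · rw [mul_zero]
  have hcc : c * (starRingEnd ℂ) c = 1 := by
    rw [hpolyc, htildc] at hQ1
    have h2 : (Polynomial.C (c * (starRingEnd ℂ) c) - 1) *
        (poly n G * tild n (fun s => (starRingEnd ℂ) (G s))) = 0 := by
      rw [map_mul]
      linear_combination hQ1
    rcases mul_eq_zero.1 h2 with h | h
    · have h3 : Polynomial.C (c * (starRingEnd ℂ) c) = (1 : Polynomial ℂ) := by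
        rwa [sub_eq_zero] at h
      rw [← Polynomial.C_1] at h3
      exact Polynomial.C_injective h3
    · exact absurd h (mul_ne_zero hB hBt)
  have habs : ‖c‖ = 1 := by
    have h := Complex.mul_conj c
    rw [hcc] at h
    have hns : Complex.normSq c = 1 := by exact_mod_cast h.symm
    rw [Complex.norm_def, hns, Real.sqrt_one]
  refine ⟨c.arg, fun s => ?_⟩
  have hcexp : Complex.exp (Complex.I * (c.arg : ℂ)) = c := by
    have h := Complex.norm_mul_exp_arg_mul_I c
    rw [habs] at h
    rw [mul_comm]
    simpa using h
  rw [hcexp]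
  by_cases hs : (s : ℕ) < n
  · rw [← hFs s, ← hGs s]
    exact hc _ hs
  · rw [hf0 s (le_of_not_gt hs), hg0 s (le_of_not_gt hs), mul_zero]
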